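/- Let R be a commutative Q-algebra and P ∈ R[y]. Then P is a coordinate of R[y] if and only if the derivative P'(y) is a unit of the ring R[y]. -/

import Mathlib

open Polynomial

/-- Taylor-type expansion for composition. -/
private lemma comp_binom {R : Type*} [CommRing R] (P x y : Polynomial R) :
    ∃ k : Polynomial R,
      P.comp (x + y) = P.comp x + (derivative P).comp x * y + k * y ^ 2 := by
  obtain ⟨k, hk⟩ := Polynomial.binomExpansion (P.map C) x y
  refine ⟨k, ?_⟩
  simpa [Polynomial.eval_map, Polynomial.comp, Polynomial.derivative_map] using hk

private lemma exists_right_inv {R : Type*} [CommRing R] [Algebra ℚ R] (P : Polynomial R)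
    (hP : IsUnit (derivative P)) : ∃ Q : Polynomial R, P.comp Q = X := by
  obtain ⟨hu0, hnil0⟩ := (Polynomial.isUnit_iff_coeff_isUnit_isNilpotent).mp hP
  have hu : IsUnit (P.coeff 1) := by simpa [Polynomial.coeff_derivative] using hu0
  have hnil : ∀ i : ℕ, 2 ≤ i → IsNilpotent (P.coeff i) := by
    intro i hi
    obtain ⟨j, rfl⟩ : ∃ j, i = j + 1 := ⟨i - 1, by omega⟩
    have h1 : IsNilpotent ((derivative P).coeff j) := hnil0 j (by omega)
    rw [Polynomial.coeff_derivative] at h1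
    have h2 : IsNilpotent (P.coeff (j + 1) * (j + 1 : R) * algebraMap ℚ R (1 / (j + 1))) := by
      obtain ⟨n, hn⟩ := h1
      exact ⟨n, by rw [mul_pow, hn, zero_mul]⟩
    have h3 : ((j : R) + 1) * algebraMap ℚ R (1 / (j + 1)) = 1 := by
      have : ((j : R) + 1) = algebraMap ℚ R ((j : ℚ) + 1) := by
        simp [map_add, map_natCast]
      rw [this, ← map_mul]
      rw [show ((j : ℚ) + 1) * (1 / (j + 1)) = 1 by
        field_simp]
      simp
    rwa [mul_assoc, h3, mul_one] at h2
  -- set up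
  set a := P.coeff 0 with ha
  set c := P.coeff 1 with hc
  obtain ⟨b, hb⟩ := hu.exists_right_inv
  set Q₀ : Polynomial R := C b * (X - C a) with hQ₀
  set M : Polynomial R := P - C a - C c * X with hMdef
  have hM : IsNilpotent M := by
    rw [Polynomial.isNilpotent_iff]
    intro i
    match i with
    | 0 => simp [hMdef, ha]
    | 1 => simp [hMdef, hc]
    | (n + 2) =>
      have := hnil (n + 2) (by omega)
      simpa [hMdef, Polynomial.coeff_C] using this
  have hcomp : P.comp Q₀ = M.comp Q₀ + X := by
    have h1 : C c * Q₀ = X - C a := by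
      rw [hQ₀, ← mul_assoc, ← C_mul, hb, C_1, one_mul]
    have : M.comp Q₀ = P.comp Q₀ - C a - C c * Q₀ := by
      simp [hMdef, Polynomial.sub_comp, Polynomial.C_comp, Polynomial.mul_comp,
        Polynomial.X_comp]
    rw [this, h1]; ring
  set E : Polynomial R := P.comp Q₀ - X with hE
  have hEnil : IsNilpotent E := by
    obtain ⟨n, hn⟩ := hM
    refine ⟨n, ?_⟩
    have : E = M.comp Q₀ := by rw [hE, hcomp]; ring
    rw [this, ← Polynomial.pow_comp, hn, Polynomial.zero_comp]
  have key : ∀ j : ℕ, ∃ Q m : Polynomial R, P.comp Q - X = m * E ^ (2 ^ j) := by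
    intro j
    induction j with
    | zero => exact ⟨Q₀, 1, by simp [hE]⟩
    | succ j ih =>
      obtain ⟨Q, m, hQ⟩ := ih
      have hu' : IsUnit ((derivative P).comp Q) := by
        simpa [Polynomial.comp_eq_aeval] using hP.map (Polynomial.aeval Q : _ →ₐ[R] _)
      obtain ⟨v, hv⟩ := hu'.exists_right_inv
      set d : Polynomial R := -(m * E ^ (2 ^ j) * v) with hd
      obtain ⟨k, hk⟩ := comp_binom P Q d
      refine ⟨Q + d, k * v ^ 2 * m ^ 2, ?_⟩
      have hQ' : P.comp Q = X + m * E ^ (2 ^ j) := by linear_combination hQ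
      rw [hk, hQ', show (2:ℕ) ^ (j+1) = 2 ^ j + 2 ^ j by ring, pow_add]
      linear_combination (-(m * E ^ (2 ^ j))) * hv
  obtain ⟨K, hK⟩ := hEnil
  obtain ⟨Q, m, hQ⟩ := key K
  have hzero : E ^ (2 ^ K) = 0 :=
    pow_eq_zero_of_le (Nat.le_of_lt (Nat.lt_two_pow_self (n := K))) hK
  refine ⟨Q, ?_⟩
  rw [hzero, mul_zero, sub_eq_zero] at hQ
  exact hQ

private lemma exists_comp_inv {R : Type*} [CommRing R] [Algebra ℚ R] (P : Polynomial R)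
    (hP : IsUnit (derivative P)) :
    ∃ Q : Polynomial R, P.comp Q = X ∧ Q.comp P = X := by
  obtain ⟨Q, hQ⟩ := exists_right_inv P hP
  have hQ' : IsUnit (derivative Q) := by
    have h := congrArg derivative hQ
    rw [Polynomial.derivative_comp, Polynomial.derivative_X] at h
    exact IsUnit.of_mul_eq_one _ h
  obtain ⟨S, hS⟩ := exists_right_inv Q hQ'
  have : S = P := by
    have h1 : (P.comp Q).comp S = S := by rw [hQ, Polynomial.X_comp]
    have h2 : (P.comp Q).comp S = P := by
      rw [Polynomial.comp_assoc, hS, Polynomial.comp_X]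
    rw [← h1, h2]
  exact ⟨Q, hQ, this ▸ hS⟩

/-- Over a `ℚ`-algebra, `P` is a coordinate of `R[y]` iff `P'` is a unit of `R[y]`. -/
theorem coordinate_iff_derivative_isUnit (R : Type*) [CommRing R] [Algebra ℚ R]
    (P : Polynomial R) :
    (∃ σ : Polynomial R ≃ₐ[R] Polynomial R, σ Polynomial.X = P) ↔
      IsUnit (Polynomial.derivative P) := by
  constructor
  · rintro ⟨σ, hσ⟩
    have hσ' : (σ : Polynomial R →ₐ[R] Polynomial R) = aeval P :=
      Polynomial.algHom_ext (by simpa using hσ)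
    set Q : Polynomial R := σ.symm X with hQdef
    have hQP : Q.comp P = X := by
      have : σ Q = X := σ.apply_symm_apply X
      rwa [show σ Q = aeval P Q from AlgHom.congr_fun hσ' Q,
        ← Polynomial.comp_eq_aeval] at this
    have h := congrArg derivative hQP
    rw [Polynomial.derivative_comp, Polynomial.derivative_X] at h
    exact IsUnit.of_mul_eq_one _ h
  · intro hP
    obtain ⟨Q, hPQ, hQP⟩ := exists_comp_inv P hP
    exact ⟨Polynomial.algEquivOfCompEqX P Q hPQ hQP, by simp⟩
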